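/- Let R be a nonzero commutative ring and M a commutative monoid. If the R-algebra R[M] is of finite type, then the monoid M is finitely generated; conversely, if M is finitely generated then R[M] is an R-algebra of finite presentation. -/

import Mathlib

open scoped TensorProduct

/-- The canonical `R`-algebra equivalence `R ⊗[ℤ] ℤ[M] ≃ₐ[R] R[M]`. -/
noncomputable def addMonoidAlgebraBaseChange (R : Type*) [CommRing R]
    (M : Type*) [AddCommMonoid M] :
    (R ⊗[ℤ] AddMonoidAlgebra ℤ M) ≃ₐ[R] AddMonoidAlgebra R M := by
  refine AlgEquiv.ofAlgHom
    (Algebra.TensorProduct.lift (Algebra.ofId R (AddMonoidAlgebra R M))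
      ((AddMonoidAlgebra.lift ℤ (AddMonoidAlgebra R M) M) (AddMonoidAlgebra.of R M))
      (fun x y => Commute.all _ _))
    ((AddMonoidAlgebra.lift R (R ⊗[ℤ] AddMonoidAlgebra ℤ M) M)
      ((Algebra.TensorProduct.includeRight :
          AddMonoidAlgebra ℤ M →ₐ[ℤ] R ⊗[ℤ] AddMonoidAlgebra ℤ M).toMonoidHom.comp
        (AddMonoidAlgebra.of ℤ M)))
    ?_ ?_
  · apply AddMonoidAlgebra.algHom_ext
    intro m
    simp [AddMonoidAlgebra.lift_single]
    exact Subsingleton.elim _ _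
  · apply Algebra.TensorProduct.ext
    · ext
    · apply AddMonoidAlgebra.algHom_ext
      intro m
      simp [AddMonoidAlgebra.lift_single]
      exact Subsingleton.elim _ _

/-- Let `R` be a nonzero commutative ring and `M` a commutative monoid.  If the
`R`-algebra `R[M]` is of finite type then `M` is finitely generated; conversely, if
`M` is finitely generated then `R[M]` is an `R`-algebra of finite presentation. -/
theorem monoidAlgebra_finiteType_fg (R : Type*) [CommRing R] [Nontrivial R]
    (M : Type*) [AddCommMonoid M] :
    (Algebra.FiniteType R (AddMonoidAlgebra R M) → AddMonoid.FG M) ∧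
      (AddMonoid.FG M → Algebra.FinitePresentation R (AddMonoidAlgebra R M)) := by
  constructor
  · intro h
    exact AddMonoidAlgebra.finiteType_iff_fg.mp h
  · intro h
    have h1 : Algebra.FiniteType ℤ (AddMonoidAlgebra ℤ M) :=
      AddMonoidAlgebra.finiteType_of_fg ℤ M
    have h2 : Algebra.FinitePresentation ℤ (AddMonoidAlgebra ℤ M) :=
      Algebra.FinitePresentation.of_finiteType.mp h1
    have h3 : Algebra.FinitePresentation R (R ⊗[ℤ] AddMonoidAlgebra ℤ M) :=
      inferInstance
    exact Algebra.FinitePresentation.equiv (addMonoidAlgebraBaseChange R M)
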